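/- Let Z ~ Binomial(m, s/m) with 1 <= s <= m/2. Then E| sqrt(Z) - sqrt(s) | >= c for an absolute constant c > 0. -/

import Mathlib

open MeasureTheory ProbabilityTheory Real
open scoped BigOperators ENNReal

/-- The subgaussian (psi_2) norm of a real random variable. -/
noncomputable def psi2 {Ω : Type*} [MeasurableSpace Ω] (μ : Measure Ω) (Z : Ω → ℝ) : ℝ :=
  sInf {t : ℝ | 0 < t ∧ ∫ ω, Real.exp (Z ω ^ 2 / t ^ 2) ∂μ ≤ 2}

/-- A real random variable is subgaussian. -/
def Subgaussian {Ω : Type*} [MeasurableSpace Ω] (μ : Measure Ω) (Z : Ω → ℝ) : Prop :=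
  ∃ t : ℝ, 0 < t ∧ ∫ ω, Real.exp (Z ω ^ 2 / t ^ 2) ∂μ ≤ 2

/-- The subgaussian norm of a random vector: sup of marginal subgaussian norms. -/
noncomputable def vpsi2 {Ω : Type*} [MeasurableSpace Ω] (μ : Measure Ω) {m : ℕ}
    (V : Ω → EuclideanSpace ℝ (Fin m)) : ℝ :=
  ⨆ u : {u : EuclideanSpace ℝ (Fin m) // ‖u‖ = 1},
    psi2 μ (fun ω => (inner ℝ (V ω) (u : EuclideanSpace ℝ (Fin m)) : ℝ))

/-- A random vector is subgaussian: a uniform witness over all directions. -/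
def SubgaussianVec {Ω : Type*} [MeasurableSpace Ω] (μ : Measure Ω) {m : ℕ}
    (V : Ω → EuclideanSpace ℝ (Fin m)) : Prop :=
  ∃ t : ℝ, 0 < t ∧ ∀ u : EuclideanSpace ℝ (Fin m), ‖u‖ = 1 →
    ∫ ω, Real.exp ((inner ℝ (V ω) u : ℝ) ^ 2 / t ^ 2) ∂μ ≤ 2

/-- The Bernoulli(p) law on `ℝ`, taking value `1` with probability `p`. -/
noncomputable def bernoulliLaw (p : ℝ) : Measure ℝ :=
  ENNReal.ofReal p • Measure.dirac 1 + ENNReal.ofReal (1 - p) • Measure.dirac 0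

lemma bernoulli_integral (p : ℝ) (hp0 : 0 ≤ p) (hp1 : p ≤ 1) (f : ℝ → ℝ) :
    ∫ x, f x ∂(bernoulliLaw p) = p * f 1 + (1 - p) * f 0 := by
  have hi : ∀ (a : ℝ) (c : ℝ≥0∞), c ≠ ⊤ → Integrable f (c • Measure.dirac a) := by
    intro a c hc
    refine Integrable.smul_measure ?_ hc
    exact (integrable_const (f a)).congr (ae_eq_dirac f).symm
  unfold bernoulliLaw
  rw [integral_add_measure (hi 1 _ ENNReal.ofReal_ne_top) (hi 0 _ ENNReal.ofReal_ne_top),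
    integral_smul_measure, integral_smul_measure, integral_dirac, integral_dirac,
    ENNReal.toReal_ofReal hp0, ENNReal.toReal_ofReal (by linarith), smul_eq_mul, smul_eq_mul]

lemma bounded_integrable {Ω : Type} [MeasurableSpace Ω] (μ : Measure Ω) [IsProbabilityMeasure μ]
    {f : Ω → ℝ} (hf : AEStronglyMeasurable f μ) {C : ℝ} (h : ∀ᵐ ω ∂μ, |f ω| ≤ C) :
    Integrable f μ :=
  (integrable_const C).mono' hf (by simpa [Real.norm_eq_abs] using h)

lemma sum_pow4_bound {Ω : Type} [MeasurableSpace Ω] (μ : Measure Ω) [IsProbabilityMeasure μ]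
    {n : ℕ} (Y : Fin n → Ω → ℝ) (e2 e4 : ℝ)
    (hmeas : ∀ i, Measurable (Y i))
    (hindep : iIndepFun Y μ)
    (hbd : ∀ i, ∀ᵐ ω ∂μ, |Y i ω| ≤ 1)
    (h1 : ∀ i, ∫ ω, Y i ω ∂μ = 0)
    (h2 : ∀ i, ∫ ω, (Y i ω)^2 ∂μ = e2)
    (h4 : ∀ i, ∫ ω, (Y i ω)^4 ∂μ ≤ e4) :
    ∀ T : Finset (Fin n),
      (∫ ω, (∑ i ∈ T, Y i ω) ∂μ = 0) ∧
      (∫ ω, (∑ i ∈ T, Y i ω)^2 ∂μ = T.card * e2) ∧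
      (∫ ω, (∑ i ∈ T, Y i ω)^4 ∂μ ≤ T.card * e4 + 3 * (T.card:ℝ)^2 * e2^2) := by
  classical
  intro T
  induction T using Finset.induction_on with
  | empty => refine ⟨by simp, by simp, by simp⟩
  | @insert j T hj ih =>
    obtain ⟨ih1, ih2, ih4⟩ := ih
    set S : Ω → ℝ := fun ω => ∑ i ∈ T, Y i ω with hSdef
    set V : Ω → ℝ := Y j with hVdef
    set c : ℝ := (T.card : ℝ) with hcdef
    have hc0 : 0 ≤ c := Nat.cast_nonneg _
    have hSmeas : Measurable S := Finset.measurable_sum T (fun i _ => hmeas i)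
    have hbdall : ∀ᵐ ω ∂μ, ∀ i, |Y i ω| ≤ 1 := ae_all_iff.2 hbd
    have hSbd : ∀ᵐ ω ∂μ, |S ω| ≤ c := by
      filter_upwards [hbdall] with ω hω
      refine (Finset.abs_sum_le_sum_abs _ _).trans ?_
      calc ∑ i ∈ T, |Y i ω| ≤ ∑ _i ∈ T, (1:ℝ) := Finset.sum_le_sum (fun i _ => hω i)
        _ = c := by simp [hcdef]
    have hSint : ∀ k : ℕ, Integrable (fun ω => S ω ^ k) μ := by
      intro k
      refine bounded_integrable μ ((hSmeas.pow_const k).aestronglyMeasurable) (C := c ^ k) ?_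
      filter_upwards [hSbd] with ω h
      rw [abs_pow]; exact pow_le_pow_left₀ (abs_nonneg _) h k
    have hVint : ∀ k : ℕ, Integrable (fun ω => V ω ^ k) μ := by
      intro k
      refine bounded_integrable μ (((hmeas j).pow_const k).aestronglyMeasurable) (C := 1) ?_
      filter_upwards [hbd j] with ω h
      rw [abs_pow]; calc |V ω| ^ k ≤ 1 ^ k := pow_le_pow_left₀ (abs_nonneg _) h k
        _ = 1 := one_pow k
    have hSVint : ∀ a b : ℕ, Integrable (fun ω => S ω ^ a * V ω ^ b) μ := by
      intro a b
      refine bounded_integrable μ (((hSmeas.pow_const a).mul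
        ((hmeas j).pow_const b)).aestronglyMeasurable) (C := c ^ a) ?_
      filter_upwards [hSbd, hbd j] with ω h1' h2'
      rw [abs_mul, abs_pow, abs_pow]
      calc |S ω| ^ a * |V ω| ^ b ≤ c ^ a * 1 ^ b := by
            exact mul_le_mul (pow_le_pow_left₀ (abs_nonneg _) h1' a)
              (pow_le_pow_left₀ (abs_nonneg _) h2' b) (by positivity) (by positivity)
        _ = c ^ a := by simp
    have hIndSV : IndepFun S V μ := by
      have h := hindep.indepFun_finset_sum_of_notMem hmeas hj
      have : (∑ i ∈ T, Y i) = S := by funext ω; simp [hSdef, Finset.sum_apply]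
      rwa [this] at h
    have hmul : ∀ a b : ℕ, ∫ ω, S ω ^ a * V ω ^ b ∂μ
        = (∫ ω, S ω ^ a ∂μ) * ∫ ω, V ω ^ b ∂μ := by
      intro a b
      exact (hIndSV.comp (measurable_id.pow_const a)
        (measurable_id.pow_const b)).integral_mul_eq_mul_integral (hSint a).aestronglyMeasurable (hVint b).aestronglyMeasurable
    have hS1' : ∫ ω, S ω ∂μ = 0 := ih1
    have hS2' : ∫ ω, S ω ^ 2 ∂μ = c * e2 := ih2
    have hsum : ∀ ω, ∑ i ∈ insert j T, Y i ω = V ω + S ω := by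
      intro ω; rw [Finset.sum_insert hj]
    have hcard : ((insert j T).card : ℝ) = c + 1 := by
      rw [Finset.card_insert_of_notMem hj]; push_cast; ring
    have hSint1 : Integrable S μ := by simpa using hSint 1
    have hVint1 : Integrable V μ := by simpa using hVint 1
    refine ⟨?_, ?_, ?_⟩
    · simp_rw [hsum]
      rw [integral_add hVint1 hSint1, h1 j, hS1']; ring
    · have expand2 : ∀ ω, (V ω + S ω)^2 = S ω^2 + (2*(S ω^1 * V ω^1) + V ω^2) := by
        intro ω; ring
      have hA : Integrable (fun ω => 2*(S ω^1 * V ω^1)) μ := (hSVint 1 1).const_mul 2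
      have hB : Integrable (fun ω => 2*(S ω^1 * V ω^1) + V ω^2) μ := hA.add (hVint 2)
      simp_rw [hsum, expand2]
      rw [integral_add (hSint 2) hB, integral_add hA (hVint 2),
        integral_const_mul, hmul 1 1, hS2', h2 j, hcard]
      simp only [pow_one] at *
      rw [hS1']
      ring
    · have expand4 : ∀ ω, (V ω + S ω)^4 = S ω^4 + (4*(S ω^3 * V ω^1) +
        (6*(S ω^2 * V ω^2) + (4*(S ω^1 * V ω^3) + V ω^4))) := by intro ω; ring
      have hA : Integrable (fun ω => 4*(S ω^3 * V ω^1)) μ := (hSVint 3 1).const_mul 4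
      have hB : Integrable (fun ω => 6*(S ω^2 * V ω^2)) μ := (hSVint 2 2).const_mul 6
      have hC : Integrable (fun ω => 4*(S ω^1 * V ω^3)) μ := (hSVint 1 3).const_mul 4
      have hD : Integrable (fun ω => 4*(S ω^1 * V ω^3) + V ω^4) μ := hC.add (hVint 4)
      have hE : Integrable (fun ω => 6*(S ω^2 * V ω^2) + (4*(S ω^1 * V ω^3) + V ω^4)) μ :=
        hB.add hD
      have hF : Integrable (fun ω => 4*(S ω^3 * V ω^1) +
        (6*(S ω^2 * V ω^2) + (4*(S ω^1 * V ω^3) + V ω^4))) μ := hA.add hE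
      simp_rw [hsum, expand4]
      rw [integral_add (hSint 4) hF, integral_add hA hE, integral_add hB hD,
        integral_add hC (hVint 4),
        integral_const_mul, integral_const_mul, integral_const_mul,
        hmul 3 1, hmul 2 2, hmul 1 3, hcard]
      simp only [pow_one]
      rw [hS1', h1 j, hS2', h2 j]
      have hV4 := h4 j
      nlinarith [sq_nonneg e2, mul_nonneg hc0 (sq_nonneg e2), ih4]

set_option maxHeartbeats 2000000 in
theorem stmt18 :
    ∃ c : ℝ, 0 < c ∧
      ∀ (m s : ℕ), 1 ≤ s → 2 * s ≤ m →
      ∀ (Ω : Type) (_ : MeasurableSpace Ω) (μ : Measure Ω),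
        IsProbabilityMeasure μ →
        ∀ X : Fin m → Ω → ℝ,
          (∀ i, Measurable (X i)) →
          iIndepFun X μ →
          (∀ i, Measure.map (X i) μ = bernoulliLaw ((s : ℝ) / m)) →
          c ≤ ∫ ω, |Real.sqrt (∑ i, X i ω) - Real.sqrt s| ∂μ := by
  refine ⟨1/400, by norm_num, ?_⟩
  intro m s hs1 hsm Ω mΩ μ hprob X hXm hindep hlaw
  have hm0 : (0:ℝ) < m := by
    have : 2 ≤ m := le_trans (by omega) hsm
    exact_mod_cast Nat.lt_of_lt_of_le (by norm_num) this
  have hs0 : (1:ℝ) ≤ (s:ℝ) := by exact_mod_cast hs1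
  have hms : 2*(s:ℝ) ≤ m := by exact_mod_cast hsm
  set p : ℝ := (s:ℝ)/m with hpdef
  have hp0 : 0 < p := div_pos (by linarith) hm0
  have hp2 : p ≤ 1/2 := by rw [hpdef, div_le_iff₀ hm0]; linarith
  have hp1 : p ≤ 1 := by linarith
  have hmp : (m:ℝ) * p = s := by rw [hpdef]; field_simp
  have hint : ∀ (i : Fin m) (f : ℝ → ℝ), Measurable f →
      ∫ ω, f (X i ω) ∂μ = p * f 1 + (1-p) * f 0 := by
    intro i f hf
    rw [← integral_map (hXm i).aemeasurable hf.aestronglyMeasurable, hlaw i,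
      bernoulli_integral p hp0.le hp1 f]
  set Y : Fin m → Ω → ℝ := fun i ω => X i ω - p with hYdef
  have hYmeas : ∀ i, Measurable (Y i) := fun i => (hXm i).sub measurable_const
  have hYindep : iIndepFun Y μ :=
    hindep.comp (fun _ => fun x => x - p) (fun _ => measurable_id.sub measurable_const)
  have hY1 : ∀ i, ∫ ω, Y i ω ∂μ = 0 := by
    intro i
    have h := hint i (fun x => x - p) (measurable_id.sub measurable_const)
    simp only [hYdef]
    rw [h]; ring
  have hY2 : ∀ i, ∫ ω, (Y i ω)^2 ∂μ = p*(1-p) := by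
    intro i
    have h := hint i (fun x => (x - p)^2) (by fun_prop)
    simp only [hYdef]
    rw [h]; ring
  have hY4 : ∀ i, ∫ ω, (Y i ω)^4 ∂μ ≤ p*(1-p) := by
    intro i
    have h := hint i (fun x => (x - p)^4) (by fun_prop)
    simp only [hYdef]
    rw [h]
    have hq0 : (0:ℝ) ≤ 1 - p := by linarith
    have hsum3 : (1-p)^3 + p^3 ≤ 1 := by nlinarith [mul_nonneg hp0.le hq0]
    have hkey3 := mul_le_mul_of_nonneg_left hsum3 (mul_nonneg hp0.le hq0)
    show p * ((1:ℝ) - p)^4 + (1 - p)*((0:ℝ) - p)^4 ≤ p*(1-p)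
    nlinarith [hkey3]
  have hae01 : ∀ i, ∀ᵐ ω ∂μ, X i ω = 0 ∨ X i ω = 1 := by
    intro i
    rw [ae_iff]
    have hset : {ω | ¬(X i ω = 0 ∨ X i ω = 1)} = X i ⁻¹' (({0,1} : Set ℝ)ᶜ) := by
      ext ω; simp [not_or]
    have hms' : MeasurableSet (({0,1} : Set ℝ)ᶜ) :=
      ((measurableSet_singleton (1:ℝ)).insert 0).compl
    rw [hset, ← Measure.map_apply (hXm i) hms', hlaw i]
    simp [bernoulliLaw, Measure.dirac_apply]
  have hYbd : ∀ i, ∀ᵐ ω ∂μ, |Y i ω| ≤ 1 := by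
    intro i
    filter_upwards [hae01 i] with ω h
    have : Y i ω = X i ω - p := rfl
    rcases h with h | h <;> rw [this, h, abs_le] <;> constructor <;> linarith
  obtain ⟨hS1, hS2, hS4⟩ := sum_pow4_bound μ Y (p*(1-p)) (p*(1-p))
    hYmeas hYindep hYbd hY1 hY2 hY4 Finset.univ
  set Z : Ω → ℝ := fun ω => ∑ i, X i ω with hZdef
  have hZmeas : Measurable Z := Finset.measurable_sum _ (fun i _ => hXm i)
  have hsum_eq : ∀ ω, ∑ i, Y i ω = Z ω - s := by
    intro ω
    show ∑ i, (X i ω - p) = (∑ i, X i ω) - s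
    rw [Finset.sum_sub_distrib, Finset.sum_const, Finset.card_univ, Fintype.card_fin,
      nsmul_eq_mul, hmp]
  set v : ℝ := (m:ℝ) * (p*(1-p)) with hvdef
  have hv_eq : v = s * (1-p) := by rw [hvdef, ← mul_assoc, hmp]
  have hv_half : 1/2 ≤ v := by rw [hv_eq]; nlinarith
  have hv0 : 0 < v := lt_of_lt_of_le (by norm_num) hv_half
  have hcards : (((Finset.univ : Finset (Fin m)).card : ℕ) : ℝ) = (m:ℝ) := by simp
  simp_rw [hsum_eq] at hS1 hS2 hS4
  rw [hcards] at hS2 hS4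
  have hS2' : ∫ ω, (Z ω - s)^2 ∂μ = v := by rw [hS2, hvdef]
  have hS4' : ∫ ω, (Z ω - s)^4 ∂μ ≤ 5*v^2 := by
    have hsq : (m:ℝ)^2 * (p*(1-p))^2 = v^2 := by rw [hvdef]; ring
    have hv2 : v ≤ 2*v^2 := by nlinarith
    calc ∫ ω, (Z ω - s)^4 ∂μ ≤ (m:ℝ) * (p*(1-p)) + 3 * (m:ℝ)^2 * (p*(1-p))^2 := hS4
      _ = v + 3*v^2 := by rw [← hvdef]; rw [mul_assoc, hsq]
      _ ≤ 5*v^2 := by nlinarith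
  have haeZ : ∀ᵐ ω ∂μ, 0 ≤ Z ω ∧ Z ω ≤ m := by
    filter_upwards [ae_all_iff.2 hae01] with ω h
    constructor
    · exact Finset.sum_nonneg (fun i _ => by rcases h i with h'|h' <;> simp [h'])
    · calc Z ω ≤ ∑ _i : Fin m, (1:ℝ) :=
          Finset.sum_le_sum (fun i _ => by rcases h i with h'|h' <;> simp [h'])
        _ = m := by simp
  have hZint : Integrable Z μ := by
    refine bounded_integrable μ hZmeas.aestronglyMeasurable (C := m) ?_
    filter_upwards [haeZ] with ω h
    rw [abs_le]; exact ⟨by linarith [h.1], h.2⟩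
  have hEZ : ∫ ω, Z ω ∂μ = s := by
    have h := hS1
    rwa [integral_sub hZint (integrable_const _), integral_const, probReal_univ, one_smul, sub_eq_zero] at h
  have hbZs : ∀ᵐ ω ∂μ, |Z ω - s| ≤ (m:ℝ) + s := by
    filter_upwards [haeZ] with ω h
    rw [abs_le]; constructor <;> [linarith [h.1, hs0]; linarith [h.2, hs0]]
  have hZk : ∀ k : ℕ, Integrable (fun ω => (Z ω - s)^k) μ := by
    intro k
    refine bounded_integrable μ (((hZmeas.sub measurable_const).pow_const k).aestronglyMeasurable)
      (C := ((m:ℝ)+s)^k) ?_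
    filter_upwards [hbZs] with ω h
    rw [abs_pow]; exact pow_le_pow_left₀ (abs_nonneg _) h k
  -- Paley-Zygmund
  set A1 : Set Ω := {ω | v/4 ≤ (Z ω - s)^2} with hA1def
  have hA1meas : MeasurableSet A1 :=
    measurableSet_le measurable_const ((hZmeas.sub measurable_const).pow_const 2)
  have hind1 : Integrable (A1.indicator (fun _ => (1:ℝ))) μ := (integrable_const 1).indicator hA1meas
  have hkey : ∀ ω, (Z ω - s)^2 ≤ v/4 + (Z ω - s)^4/(20*v)
      + (5*v) * A1.indicator (fun _ => (1:ℝ)) ω := by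
    intro ω
    by_cases hω : ω ∈ A1
    · rw [Set.indicator_of_mem hω, mul_one]
      have gen : ∀ x u : ℝ, x^2 = u*(20*v) → x ≤ v/4 + u + 5*v := by
        intro x u hxu
        nlinarith [sq_nonneg (x - 10*v), hv0]
      have hxu : ((Z ω - s)^2)^2 = ((Z ω - s)^4/(20*v))*(20*v) := by
        field_simp
      exact gen _ _ hxu
    · rw [Set.indicator_of_notMem hω, mul_zero, add_zero]
      have hx : (Z ω - s)^2 < v/4 := lt_of_not_ge hω
      have h4nn : 0 ≤ (Z ω - s)^4/(20*v) := div_nonneg (by positivity) (by linarith)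
      linarith
  have hRHSb : Integrable (fun ω => (Z ω - s)^4/(20*v)) μ := (hZk 4).div_const _
  have hRHSc : Integrable (fun ω => (5*v) * A1.indicator (fun _ => (1:ℝ)) ω) μ :=
    hind1.const_mul _
  have hRHSab : Integrable (fun ω => v/4 + (Z ω - s)^4/(20*v)) μ :=
    (integrable_const _).add hRHSb
  have hRHS : Integrable (fun ω => v/4 + (Z ω - s)^4/(20*v)
      + (5*v) * A1.indicator (fun _ => (1:ℝ)) ω) μ := hRHSab.add hRHSc
  have hmono := integral_mono (hZk 2) hRHS hkey
  rw [integral_add hRHSab hRHSc, integral_add (integrable_const _) hRHSb,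
    integral_const, integral_div, integral_const_mul, integral_indicator_const _ hA1meas,
    probReal_univ, one_smul, smul_eq_mul, mul_one, hS2', measureReal_def] at hmono
  set μ1 : ℝ := (μ A1).toReal with hμ1def
  have hμ1nn : 0 ≤ μ1 := ENNReal.toReal_nonneg
  have hmu1ge : 1/10 ≤ μ1 := by
    have h20 : (0:ℝ) < 20*v := by linarith
    have hdiv : (∫ ω, (Z ω - s)^4 ∂μ)/(20*v) ≤ (5*v^2)/(20*v) :=
      div_le_div_of_nonneg_right hS4' h20.le
    have hfe : (5*v^2)/(20*v) = v/4 := by field_simp; ring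
    nlinarith [hmono, hdiv, hfe, hv0]
  -- Markov
  set A2 : Set Ω := {ω | 32*(s:ℝ) ≤ Z ω} with hA2def
  have hA2meas : MeasurableSet A2 := measurableSet_le measurable_const hZmeas
  have hind2 : Integrable (A2.indicator (fun _ => (1:ℝ))) μ :=
    (integrable_const 1).indicator hA2meas
  have hmu2 : (μ A2).toReal ≤ 1/32 := by
    have hpt : ∀ᵐ ω ∂μ, (32*(s:ℝ)) * A2.indicator (fun _ => (1:ℝ)) ω ≤ Z ω := by
      filter_upwards [haeZ] with ω h
      by_cases hω : ω ∈ A2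
      · rw [Set.indicator_of_mem hω, mul_one]; exact hω
      · rw [Set.indicator_of_notMem hω, mul_zero]; exact h.1
    have hI := integral_mono_ae (hind2.const_mul _) hZint hpt
    rw [integral_const_mul, integral_indicator_const _ hA2meas, smul_eq_mul, mul_one, hEZ, measureReal_def] at hI
    by_contra hcon
    push_neg at hcon
    have h32 : (0:ℝ) < 32*(s:ℝ) := by linarith
    have hx := mul_lt_mul_of_pos_left hcon h32
    linarith
  -- combine
  set A : Set Ω := A1 ∩ A2ᶜ with hAdef
  have hAmeas : MeasurableSet A := hA1meas.inter hA2meas.compl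
  have hmuA : 1/20 ≤ (μ A).toReal := by
    have hsub : A1 ⊆ A ∪ A2 := by
      intro ω h
      by_cases h2 : ω ∈ A2
      · exact Or.inr h2
      · exact Or.inl ⟨h, h2⟩
    have h1 : μ A1 ≤ μ A + μ A2 := (measure_mono hsub).trans (measure_union_le _ _)
    have h2 : (μ A1).toReal ≤ (μ A).toReal + (μ A2).toReal := by
      rw [← ENNReal.toReal_add (measure_ne_top μ _) (measure_ne_top μ _)]
      exact ENNReal.toReal_mono
        (ENNReal.add_ne_top.2 ⟨measure_ne_top μ _, measure_ne_top μ _⟩) h1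
    linarith [hmu1ge, hmu2]
  -- final pointwise bound
  have hsmAbs : Measurable (fun ω => |Real.sqrt (Z ω) - Real.sqrt s|) :=
    ((Real.continuous_sqrt.measurable.comp hZmeas).sub measurable_const).abs
  have habs_int : Integrable (fun ω => |Real.sqrt (Z ω) - Real.sqrt s|) μ := by
    refine bounded_integrable μ hsmAbs.aestronglyMeasurable
      (C := Real.sqrt m + Real.sqrt s) ?_
    filter_upwards [haeZ] with ω h
    rw [abs_abs]
    have h1 : Real.sqrt (Z ω) ≤ Real.sqrt m := Real.sqrt_le_sqrt h.2
    have h2 : 0 ≤ Real.sqrt (Z ω) := Real.sqrt_nonneg _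
    have h3 : 0 ≤ Real.sqrt (s:ℝ) := Real.sqrt_nonneg _
    have h4 : 0 ≤ Real.sqrt (m:ℝ) := Real.sqrt_nonneg _
    rw [abs_le]; constructor <;> linarith
  have hindA : Integrable (A.indicator (fun _ => (1:ℝ))) μ :=
    (integrable_const 1).indicator hAmeas
  have hfinal : ∀ᵐ ω ∂μ, (1/20) * A.indicator (fun _ => (1:ℝ)) ω
      ≤ |Real.sqrt (Z ω) - Real.sqrt s| := by
    filter_upwards [haeZ] with ω h
    by_cases hω : ω ∈ A
    · rw [Set.indicator_of_mem hω, mul_one]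
      have h1A : v/4 ≤ (Z ω - s)^2 := hω.1
      have h2A : ¬ (32*(s:ℝ) ≤ Z ω) := hω.2
      have h2B : Z ω < 32*(s:ℝ) := lt_of_not_ge h2A
      set a := Real.sqrt (Z ω) with hadef
      set b := Real.sqrt (s:ℝ) with hbdef
      have ha2 : a^2 = Z ω := Real.sq_sqrt h.1
      have hb2 : b^2 = s := Real.sq_sqrt (by linarith)
      have ha0 : 0 ≤ a := by rw [hadef]; exact Real.sqrt_nonneg _
      have hb0 : 0 ≤ b := by rw [hbdef]; exact Real.sqrt_nonneg _
      have hb1 : 1 ≤ b := by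
        rw [hbdef, show (1:ℝ) = Real.sqrt 1 by simp]
        exact Real.sqrt_le_sqrt hs0
      have hub : a ≤ 6*b := by
        calc a = Real.sqrt (Z ω) := hadef
          _ ≤ Real.sqrt (6^2*(s:ℝ)) := Real.sqrt_le_sqrt (by linarith)
          _ = 6*Real.sqrt (s:ℝ) := by
              rw [Real.sqrt_mul (by norm_num) _, Real.sqrt_sq (by norm_num)]
          _ = 6*b := by rw [← hbdef]
      have hfac : Z ω - s = (a - b)*(a + b) := by rw [← ha2, ← hb2]; ring
      have hlow : Real.sqrt v / 2 ≤ |Z ω - s| := by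
        have hh := Real.sqrt_le_sqrt h1A
        rw [Real.sqrt_sq_eq_abs] at hh
        have hhalf : Real.sqrt (v/4) = Real.sqrt v / 2 := by
          rw [show v/4 = v*(1/2)^2 by ring, Real.sqrt_mul hv0.le, Real.sqrt_sq (by norm_num)]
          ring
        linarith [hh, hhalf]
      have hvb : (7/10)*b ≤ Real.sqrt v := by
        have hps : p*(s:ℝ) ≤ (1/2)*s := mul_le_mul_of_nonneg_right hp2 (by linarith)
        have hvexp : v = s - p*s := by rw [hv_eq]; ring
        have hsq : ((7/10)*b)^2 ≤ v := by
          have hb2e : ((7/10)*b)^2 = (49/100)*(s:ℝ) := by rw [mul_pow, hb2]; norm_num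
          rw [hb2e, hvexp]; linarith [hps, hs0]
        calc (7/10)*b = Real.sqrt (((7/10)*b)^2) :=
              (Real.sqrt_sq (mul_nonneg (by norm_num) hb0)).symm
          _ ≤ Real.sqrt v := Real.sqrt_le_sqrt hsq
      have hsumpos : 0 < a + b := by linarith
      have habs_eq : |Z ω - s| = |a - b| * (a + b) := by
        rw [hfac, abs_mul, abs_of_pos hsumpos]
      have hchain : (7/20)*b ≤ |a - b| * (a + b) := by
        rw [← habs_eq]; linarith [hlow, hvb]
      have hgoal : (1/20)*(a + b) ≤ |a - b| * (a + b) := by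
        have hz : (1/20)*(a+b) ≤ (7/20)*b := by linarith [hub, ha0]
        linarith
      exact le_of_mul_le_mul_right hgoal hsumpos
    · rw [Set.indicator_of_notMem hω, mul_zero]; positivity
  have hmono2 := integral_mono_ae (hindA.const_mul (1/20)) habs_int hfinal
  rw [integral_const_mul, integral_indicator_const _ hAmeas, smul_eq_mul, mul_one, measureReal_def] at hmono2
  calc (1/400:ℝ) ≤ (1/20)*(μ A).toReal := by linarith [hmuA]
    _ ≤ ∫ ω, |Real.sqrt (Z ω) - Real.sqrt s| ∂μ := hmono2
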